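/- Proposition (uniform bound on the recursion coefficients, from the proof of Lemma 5.1). Fix reals 𝔫 ≥ 1 and K > 𝔫. There exists γ* > 0, depending only on 𝔫 and K, with K·γ* < 1 and the following property: for every directed graph on a countable vertex set V with distinguished vertex 0 such that N_k^h ≤ 𝔫 for all h ∈ ℕ and k ∈ V, and every γ ∈ (0, γ*], the quantities γ_h defined in the context are well defined for all h ≥ 0 (i.e., all the denominators are positive) and satisfy γ_h ≤ K·γ/(1 − K·γ) for every h ≥ 1. -/

import Mathlib

/-- `N_k^h = #{j ∈ 𝒩₀^(h) : k ∈ 𝒩 j}`. -/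
def Nkh {V : Type*} [DecidableEq V] (𝒩 : V → Finset V) (S : ℕ → Finset V)
    (h : ℕ) (k : V) : ℕ :=
  ((S h).filter fun j => k ∈ 𝒩 j).card

/-- `max_{k ∈ 𝒩₀^(i)} N_k^h` (with the convention that a max over `∅` is `0`). -/
def Nmax {V : Type*} [DecidableEq V] (𝒩 : V → Finset V) (S : ℕ → Finset V)
    (i h : ℕ) : ℕ :=
  (S i).sup fun k => Nkh 𝒩 S h k

/-- The denominator `1 − γ·∑_{i=0}^{h} (max_{k ∈ 𝒩₀^(i)} N_k^h)·∏_{j=i}^{h−1} γ_j`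
appearing in the definition of `γ_h`. -/
noncomputable def denom {V : Type*} [DecidableEq V] (𝒩 : V → Finset V)
    (S : ℕ → Finset V) (γ : ℝ) (g : ℕ → ℝ) (h : ℕ) : ℝ :=
  1 - γ * ∑ i ∈ Finset.range (h + 1),
      (Nmax 𝒩 S i h : ℝ) * ∏ j ∈ Finset.Ico i h, g j

/-- `g` is the sequence `(γ_h)`: `γ₀ = γ` and, for `h ≥ 1`,
`γ_h = γ·(max_{k ∈ 𝒩₀^(h+1)} N_k^h) / (1 − γ·∑_{i=0}^{h} (max_{k ∈ 𝒩₀^(i)} N_k^h)·∏_{j=i}^{h−1} γ_j)`. -/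
def gammaSpec {V : Type*} [DecidableEq V] (𝒩 : V → Finset V) (S : ℕ → Finset V)
    (γ : ℝ) (g : ℕ → ℝ) : Prop :=
  g 0 = γ ∧ ∀ h, 1 ≤ h → g h = γ * (Nmax 𝒩 S (h + 1) h : ℝ) / denom 𝒩 S γ g h

lemma nmax_le_aux {V : Type*} [DecidableEq V] (𝒩 : V → Finset V) (S : ℕ → Finset V)
    (n : ℝ) (hn0 : 0 ≤ n) (hN : ∀ (h : ℕ) (k : V), (Nkh 𝒩 S h k : ℝ) ≤ n)
    (i h : ℕ) : (Nmax 𝒩 S i h : ℝ) ≤ n := by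
  have h1 : Nmax 𝒩 S i h ≤ ⌊n⌋₊ :=
    Finset.sup_le fun k _ => Nat.le_floor (hN h k)
  calc ((Nmax 𝒩 S i h : ℕ) : ℝ) ≤ (⌊n⌋₊ : ℝ) := Nat.cast_le.2 h1
    _ ≤ n := Nat.floor_le hn0

/-- **Uniform bound on the recursion coefficients** (from the proof of Lemma 5.1).
Fix `𝔫 ≥ 1` and `K > 𝔫`.  There exists `γ* > 0`, depending only on `𝔫` and `K`,
with `K·γ* < 1`, such that for every directed graph with `N_k^h ≤ 𝔫` for all
`h, k` and every `γ ∈ (0, γ*]`, the quantities `γ_h` are well defined (all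
denominators positive) and satisfy `γ_h ≤ K·γ/(1 − K·γ)` for every `h ≥ 1`. -/
theorem stmt5 (n K : ℝ) (hn : 1 ≤ n) (hK : n < K) :
    ∃ γstar : ℝ, 0 < γstar ∧ K * γstar < 1 ∧
      ∀ (V : Type) (_ : DecidableEq V) (_ : Countable V)
        (𝒩 : V → Finset V), (∀ i, i ∉ 𝒩 i) →
      ∀ (z : V) (S : ℕ → Finset V), S 0 = {z} →
        (∀ k, S (k + 1) = ((S k).biUnion 𝒩) \ ((Finset.range (k + 1)).biUnion S)) →
        (∀ (h : ℕ) (k : V), (Nkh 𝒩 S h k : ℝ) ≤ n) →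
      ∀ γ : ℝ, 0 < γ → γ ≤ γstar →
      ∀ g : ℕ → ℝ, gammaSpec 𝒩 S γ g →
        (∀ h, 1 ≤ h → 0 < denom 𝒩 S γ g h) ∧
        ∀ h, 1 ≤ h → g h ≤ K * γ / (1 - K * γ) := by
  have hK0 : (0:ℝ) < K := lt_trans (by linarith) hK
  have hKn : (0:ℝ) < K - n := by linarith
  have h2K : (0:ℝ) < 2 * K - n := by linarith
  refine ⟨(K - n) / (K * (2 * K - n)), by positivity, ?_, ?_⟩
  · have heq : K * ((K - n) / (K * (2 * K - n))) = (K - n) / (2 * K - n) := by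
      field_simp
    rw [heq, div_lt_one h2K]; linarith
  intro V _ _ 𝒩 _ z S _ _ hN γ hγ hγs g hg
  have hn0 : (0:ℝ) ≤ n := by linarith
  have hNmax : ∀ i h, (Nmax 𝒩 S i h : ℝ) ≤ n := nmax_le_aux 𝒩 S n hn0 hN
  have hA : γ * (K * (2 * K - n)) ≤ K - n := by
    calc γ * (K * (2 * K - n)) ≤ (K - n) / (K * (2 * K - n)) * (K * (2 * K - n)) := by
          gcongr
      _ = K - n := by rw [div_mul_cancel₀ _ (mul_pos hK0 h2K).ne']
  have hKγ1 : K * γ < 1 := by nlinarith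
  have hKγ0 : (0:ℝ) ≤ K * γ := by positivity
  set B := K * γ / (1 - K * γ) with hBdef
  have hden1 : (0:ℝ) < 1 - K * γ := by linarith
  have hBeq : B * (1 - K * γ) = K * γ := by
    rw [hBdef]; field_simp
  have hB0 : (0:ℝ) ≤ B := div_nonneg hKγ0 hden1.le
  have hKB : K * B + n ≤ K := by nlinarith [hBeq, hA]
  have hB1 : B < 1 := by nlinarith
  have hγB : γ ≤ B := by nlinarith [hBeq]
  have main : ∀ h, (0 ≤ g h ∧ g h ≤ B) ∧ (1 ≤ h → 1 - K * γ ≤ denom 𝒩 S γ g h) := by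
    intro h
    induction h using Nat.strong_induction_on with
    | _ h ih =>
      rcases Nat.eq_zero_or_pos h with h0 | hh
      · subst h0
        exact ⟨⟨by rw [hg.1]; exact hγ.le, by rw [hg.1]; exact hγB⟩,
          fun c => absurd c (by omega)⟩
      · have hT : ∑ i ∈ Finset.range (h+1),
            (Nmax 𝒩 S i h : ℝ) * ∏ j ∈ Finset.Ico i h, g j ≤ K := by
          have hterm : ∀ i ∈ Finset.range (h+1),
              (Nmax 𝒩 S i h : ℝ) * ∏ j ∈ Finset.Ico i h, g j ≤ n * B ^ (h - i) := by
            intro i _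
            have hprod : ∏ j ∈ Finset.Ico i h, g j ≤ B ^ (h - i) := by
              calc ∏ j ∈ Finset.Ico i h, g j ≤ ∏ _j ∈ Finset.Ico i h, B :=
                    Finset.prod_le_prod
                      (fun j hj => (ih j (Finset.mem_Ico.1 hj).2).1.1)
                      (fun j hj => (ih j (Finset.mem_Ico.1 hj).2).1.2)
                _ = B ^ (h - i) := by rw [Finset.prod_const, Nat.card_Ico]
            have hprod0 : 0 ≤ ∏ j ∈ Finset.Ico i h, g j :=
              Finset.prod_nonneg fun j hj => (ih j (Finset.mem_Ico.1 hj).2).1.1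
            exact mul_le_mul (hNmax i h) hprod hprod0 hn0
          have hgeom : ∑ m ∈ Finset.range (h+1), B ^ m ≤ 1 / (1 - B) := by
            have hmul := geom_sum_mul B (h+1)
            rw [le_div_iff₀ (by linarith : (0:ℝ) < 1 - B)]
            nlinarith [pow_nonneg hB0 (h+1)]
          have hrefl : ∑ i ∈ Finset.range (h+1), B ^ (h - i)
              = ∑ m ∈ Finset.range (h+1), B ^ m := by
            have := Finset.sum_range_reflect (fun m => B ^ m) (h+1)
            simpa using this
          calc ∑ i ∈ Finset.range (h+1),
              (Nmax 𝒩 S i h : ℝ) * ∏ j ∈ Finset.Ico i h, g j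
              ≤ ∑ i ∈ Finset.range (h+1), n * B ^ (h - i) :=
                Finset.sum_le_sum hterm
            _ = n * ∑ i ∈ Finset.range (h+1), B ^ (h - i) := by
                rw [Finset.mul_sum]
            _ = n * ∑ m ∈ Finset.range (h+1), B ^ m := by rw [hrefl]
            _ ≤ n * (1 / (1 - B)) := by
                exact mul_le_mul_of_nonneg_left hgeom hn0
            _ ≤ K := by
                rw [mul_one_div, div_le_iff₀ (by linarith : (0:ℝ) < 1 - B)]
                nlinarith
        have hden : 1 - K * γ ≤ denom 𝒩 S γ g h := by
          unfold denom
          have := mul_le_mul_of_nonneg_left hT hγ.le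
          nlinarith
        have hdpos : 0 < denom 𝒩 S γ g h := lt_of_lt_of_le hden1 hden
        have hgh := hg.2 h hh
        refine ⟨⟨?_, ?_⟩, fun _ => hden⟩
        · rw [hgh]
          exact div_nonneg (by positivity) hdpos.le
        · rw [hgh, hBdef]
          refine div_le_div₀ hKγ0 ?_ hden1 hden
          calc γ * (Nmax 𝒩 S (h+1) h : ℝ) ≤ γ * n :=
                mul_le_mul_of_nonneg_left (hNmax _ _) hγ.le
            _ ≤ K * γ := by nlinarith
  exact ⟨fun h hh => lt_of_lt_of_le hden1 ((main h).2 hh),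
    fun h hh => (main h).1.2⟩
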